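/- Let f : S_n → ℝ be linear with dist(f(π), {0,1}) ≤ ε for all π ∈ S_n, where ε < 1/6, and for squares {i_1,i_2}×{j_1,j_2} (i_1≠i_2, j_1≠j_2) write d_{i_1,i_2,j_1,j_2} = c_{i_1,j_1}+c_{i_2,j_2}−c_{i_1,j_2}−c_{i_2,j_1}. Then for any two compatible squares σ_1, σ_2 (disjoint row sets and disjoint column sets), at most one of round(d_{σ_1},{0,±1}), round(d_{σ_2},{0,±1}) is nonzero. -/
import Mathlib

open Equiv

-- difference of f under composing with a swap
lemma swap_diff {n : ℕ} (c : Fin n → Fin n → ℝ) (π : Equiv.Perm (Fin n))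
    (a b : Fin n) (hab : a ≠ b) :
    (∑ i, c i (π i)) - (∑ i, c i ((π * Equiv.swap a b) i)) =
      c a (π a) + c b (π b) - c a (π b) - c b (π a) := by
  have h : ∀ g : Fin n → ℝ, (∀ x, x ≠ a → x ≠ b → g x = 0) →
      (∑ i, g i) = g a + g b := by
    intro g hg
    rw [← Finset.sum_pair hab]
    exact (Finset.sum_subset (Finset.subset_univ _)
      (fun x _ hx => hg x (fun h => hx (by simp [h])) (fun h => hx (by simp [h])))).symm
  rw [← Finset.sum_sub_distrib,
    h (fun i => c i (π i) - c i ((π * Equiv.swap a b) i)) ?_]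
  · simp [Equiv.Perm.mul_apply, Equiv.swap_apply_left, Equiv.swap_apply_right]
    ring
  · intro x hxa hxb
    simp [Equiv.Perm.mul_apply, Equiv.swap_apply_of_ne_of_ne hxa hxb]

theorem stmt18 (n : ℕ) (c : Fin n → Fin n → ℝ)
    (f : Equiv.Perm (Fin n) → ℝ)
    (hf : ∀ π, f π = ∑ i, c i (π i))
    (ε : ℝ) (hε : ε < 1 / 6)
    (hdist : ∀ π, min |f π| |f π - 1| ≤ ε)
    (i1 i2 j1 j2 i3 i4 j3 j4 : Fin n)
    (h12 : i1 ≠ i2) (h34 : i3 ≠ i4) (g12 : j1 ≠ j2) (g34 : j3 ≠ j4)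
    (hcomp : ({i1, i2} : Set (Fin n)) ∩ {i3, i4} = ∅ ∧
             ({j1, j2} : Set (Fin n)) ∩ {j3, j4} = ∅)
    (r1 r2 : ℝ)
    (hr1 : r1 ∈ ({-1, 0, 1} : Set ℝ) ∧ ∀ v ∈ ({-1, 0, 1} : Set ℝ),
      |(c i1 j1 + c i2 j2 - c i1 j2 - c i2 j1) - r1| ≤
        |(c i1 j1 + c i2 j2 - c i1 j2 - c i2 j1) - v|)
    (hr2 : r2 ∈ ({-1, 0, 1} : Set ℝ) ∧ ∀ v ∈ ({-1, 0, 1} : Set ℝ),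
      |(c i3 j3 + c i4 j4 - c i3 j4 - c i4 j3) - r2| ≤
        |(c i3 j3 + c i4 j4 - c i3 j4 - c i4 j3) - v|) :
    r1 = 0 ∨ r2 = 0 := by
  -- extract pairwise distinctness from compatibility
  obtain ⟨hI, hJ⟩ := hcomp
  have hIne : ∀ x ∈ ({i1, i2} : Set (Fin n)), ∀ y ∈ ({i3, i4} : Set (Fin n)), x ≠ y := by
    intro x hx y hy hxy
    have : x ∈ ({i1, i2} : Set (Fin n)) ∩ {i3, i4} := ⟨hx, hxy ▸ hy⟩
    rw [hI] at this; exact this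
  have hJne : ∀ x ∈ ({j1, j2} : Set (Fin n)), ∀ y ∈ ({j3, j4} : Set (Fin n)), x ≠ y := by
    intro x hx y hy hxy
    have : x ∈ ({j1, j2} : Set (Fin n)) ∩ {j3, j4} := ⟨hx, hxy ▸ hy⟩
    rw [hJ] at this; exact this
  have h13 : i1 ≠ i3 := hIne i1 (by simp) i3 (by simp)
  have h14 : i1 ≠ i4 := hIne i1 (by simp) i4 (by simp)
  have h23 : i2 ≠ i3 := hIne i2 (by simp) i3 (by simp)
  have h24 : i2 ≠ i4 := hIne i2 (by simp) i4 (by simp)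
  have g13 : j1 ≠ j3 := hJne j1 (by simp) j3 (by simp)
  have g14 : j1 ≠ j4 := hJne j1 (by simp) j4 (by simp)
  have g23 : j2 ≠ j3 := hJne j2 (by simp) j3 (by simp)
  have g24 : j2 ≠ j4 := hJne j2 (by simp) j4 (by simp)
  -- build a permutation π with π i1 = j1, π i2 = j2, π i3 = j3, π i4 = j4
  set p1 : Equiv.Perm (Fin n) := Equiv.swap i1 j1 with hp1
  have e11 : p1 i1 = j1 := Equiv.swap_apply_left _ _
  set p2 : Equiv.Perm (Fin n) := Equiv.swap (p1 i2) j2 * p1 with hp2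
  have e21 : p2 i1 = j1 := by
    rw [hp2, Equiv.Perm.mul_apply, e11,
      Equiv.swap_apply_of_ne_of_ne (fun h => h12 (p1.injective (by rw [e11, h]))) g12]
  have e22 : p2 i2 = j2 := by rw [hp2, Equiv.Perm.mul_apply, Equiv.swap_apply_left]
  set p3 : Equiv.Perm (Fin n) := Equiv.swap (p2 i3) j3 * p2 with hp3
  have e31 : p3 i1 = j1 := by
    rw [hp3, Equiv.Perm.mul_apply, e21,
      Equiv.swap_apply_of_ne_of_ne (fun h => h13 (p2.injective (by rw [e21, h]))) g13]
  have e32 : p3 i2 = j2 := by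
    rw [hp3, Equiv.Perm.mul_apply, e22,
      Equiv.swap_apply_of_ne_of_ne (fun h => h23 (p2.injective (by rw [e22, h]))) g23]
  have e33 : p3 i3 = j3 := by rw [hp3, Equiv.Perm.mul_apply, Equiv.swap_apply_left]
  set π : Equiv.Perm (Fin n) := Equiv.swap (p3 i4) j4 * p3 with hπ
  have e41 : π i1 = j1 := by
    rw [hπ, Equiv.Perm.mul_apply, e31,
      Equiv.swap_apply_of_ne_of_ne (fun h => h14 (p3.injective (by rw [e31, h]))) g14]
  have e42 : π i2 = j2 := by
    rw [hπ, Equiv.Perm.mul_apply, e32,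
      Equiv.swap_apply_of_ne_of_ne (fun h => h24 (p3.injective (by rw [e32, h]))) g24]
  have e43 : π i3 = j3 := by
    rw [hπ, Equiv.Perm.mul_apply, e33,
      Equiv.swap_apply_of_ne_of_ne (fun h => h34 (p3.injective (by rw [e33, h]))) g34]
  have e44 : π i4 = j4 := by rw [hπ, Equiv.Perm.mul_apply, Equiv.swap_apply_left]
  -- the two square quantities
  set d1 : ℝ := c i1 j1 + c i2 j2 - c i1 j2 - c i2 j1 with hd1
  set d2 : ℝ := c i3 j3 + c i4 j4 - c i3 j4 - c i4 j3 with hd2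
  set π' : Equiv.Perm (Fin n) := π * Equiv.swap i3 i4 with hπ'
  have eπ'1 : π' i1 = j1 := by
    rw [hπ', Equiv.Perm.mul_apply, Equiv.swap_apply_of_ne_of_ne h13 h14, e41]
  have eπ'2 : π' i2 = j2 := by
    rw [hπ', Equiv.Perm.mul_apply, Equiv.swap_apply_of_ne_of_ne h23 h24, e42]
  have key1 : f π - f (π * Equiv.swap i1 i2) = d1 := by
    rw [hf, hf, swap_diff c π i1 i2 h12, e41, e42]
  have key2 : f π - f π' = d2 := by
    rw [hf, hf, hπ', swap_diff c π i3 i4 h34, e43, e44]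
  have key3 : f π' - f (π' * Equiv.swap i1 i2) = d1 := by
    rw [hf, hf, swap_diff c π' i1 i2 h12, eπ'1, eπ'2]
  -- any difference of f-values is at most 1 + 2ε in absolute value
  have hε0 : 0 ≤ ε := le_trans (le_min (abs_nonneg _) (abs_nonneg _)) (hdist π)
  have hbound : ∀ α β : Equiv.Perm (Fin n), |f α - f β| ≤ 1 + 2 * ε := by
    intro α β
    have hα := hdist α
    have hβ := hdist β
    rcases min_le_iff.mp hα with hα' | hα' <;> rcases min_le_iff.mp hβ with hβ' | hβ' <;>
      rw [abs_le] at hα' hβ' ⊢ <;> constructor <;> linarith [hα'.1, hα'.2, hβ'.1, hβ'.2]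
  have hA : |d1 + d2| ≤ 1 + 2 * ε := by
    have := hbound π (π' * Equiv.swap i1 i2)
    have heq : f π - f (π' * Equiv.swap i1 i2) = d1 + d2 := by linarith [key2, key3]
    rwa [heq] at this
  have hB : |d1 - d2| ≤ 1 + 2 * ε := by
    have := hbound π' (π * Equiv.swap i1 i2)
    have heq : f π' - f (π * Equiv.swap i1 i2) = d1 - d2 := by linarith [key1, key2]
    rwa [heq] at this
  -- d1 and d2 are within 2ε of {-1,0,1}
  have hnear : ∀ α β : Equiv.Perm (Fin n), ∃ v ∈ ({-1, 0, 1} : Set ℝ),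
      |f α - f β - v| ≤ 2 * ε := by
    intro α β
    have hα := hdist α
    have hβ := hdist β
    rcases min_le_iff.mp hα with hα' | hα' <;> rcases min_le_iff.mp hβ with hβ' | hβ'
    · exact ⟨0, by simp, by rw [abs_le] at hα' hβ' ⊢; constructor <;> linarith [hα'.1, hα'.2, hβ'.1, hβ'.2]⟩
    · exact ⟨-1, by simp, by rw [abs_le] at hα' hβ' ⊢; constructor <;> linarith [hα'.1, hα'.2, hβ'.1, hβ'.2]⟩
    · exact ⟨1, by simp, by rw [abs_le] at hα' hβ' ⊢; constructor <;> linarith [hα'.1, hα'.2, hβ'.1, hβ'.2]⟩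
    · exact ⟨0, by simp, by rw [abs_le] at hα' hβ' ⊢; constructor <;> linarith [hα'.1, hα'.2, hβ'.1, hβ'.2]⟩
  by_contra hcon
  push_neg at hcon
  obtain ⟨hr1ne, hr2ne⟩ := hcon
  -- |d1 - r1| ≤ 2ε, hence |d1| ≥ 1 - 2ε (since |r1| = 1); same for d2
  have habs1 : |r1| = 1 := by
    rcases hr1.1 with h | h | h
    · rw [h]; norm_num
    · exact absurd h hr1ne
    · rw [h]; norm_num
  have habs2 : |r2| = 1 := by
    rcases hr2.1 with h | h | h
    · rw [h]; norm_num
    · exact absurd h hr2ne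
    · rw [h]; norm_num
  have hC : 1 - 2 * ε ≤ |d1| := by
    obtain ⟨v, hv, hvle⟩ := hnear π (π * Equiv.swap i1 i2)
    rw [key1] at hvle
    have := hr1.2 v hv
    have h1 : |d1 - r1| ≤ 2 * ε := le_trans this hvle
    have := abs_sub_abs_le_abs_sub r1 d1
    rw [abs_sub_comm] at h1
    linarith [habs1 ▸ this]
  have hD : 1 - 2 * ε ≤ |d2| := by
    obtain ⟨v, hv, hvle⟩ := hnear π π'
    rw [key2] at hvle
    have := hr2.2 v hv
    have h1 : |d2 - r2| ≤ 2 * ε := le_trans this hvle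
    have := abs_sub_abs_le_abs_sub r2 d2
    rw [abs_sub_comm] at h1
    linarith [habs2 ▸ this]
  rw [abs_le] at hA hB
  rcases abs_cases d1 with ⟨hc1, _⟩ | ⟨hc1, _⟩ <;> rcases abs_cases d2 with ⟨hc2, _⟩ | ⟨hc2, _⟩ <;>
    linarith [hA.1, hA.2, hB.1, hB.2, hC, hD]
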